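/- Let z, t ∈ ℂ* with Re(t/z) > 0, and let τ, θ ∈ ℂ be such that z/(2πit) + 1/2 − θ − τ/2 is not an integer. Then Λ(z/(2πit), 1/2 − θ − τ/2) · Λ(−z/(2πit), 1/2 + θ + τ/2) = (1 + exp(πiτ + 2πiθ − z/t))^{-1}. (This is the jump relation across the active ray ℝ_{>0}·z satisfied by the solution of the quantum Riemann-Hilbert problem for the doubled A₁ refined BPS structure.) -/

import Mathlib

/-- The modified gamma function (with `ω = 1`):
`Λ(w,η) = Γ(w+η) · exp(w) / (√(2π) · exp((η + w − 1/2)·Log w))`,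
where `Log` is the principal branch of the logarithm. -/
noncomputable def Lambda (w η : ℂ) : ℂ :=
  Complex.Gamma (w + η) * Complex.exp w /
    ((Real.sqrt (2 * Real.pi) : ℂ) * Complex.exp ((η + w - 1 / 2) * Complex.log w))

/-- (Jump relation across the active ray `ℝ_{>0}·z` for the quantum
Riemann–Hilbert problem of the doubled A₁ refined BPS structure.)
Let `z, t ∈ ℂ*` with `Re(t/z) > 0`, and let `τ, θ ∈ ℂ` be such that
`z/(2πit) + 1/2 − θ − τ/2` is not an integer.  Then
`Λ(z/(2πit), 1/2 − θ − τ/2) · Λ(−z/(2πit), 1/2 + θ + τ/2)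
  = (1 + exp(πiτ + 2πiθ − z/t))⁻¹`. -/
theorem lambda_jump_relation (z t τ θ : ℂ) (hz : z ≠ 0) (ht : t ≠ 0)
    (hre : 0 < (t / z).re)
    (hint : ∀ n : ℤ, z / (2 * Real.pi * Complex.I * t) + 1 / 2 - θ - τ / 2 ≠ (n : ℂ)) :
    Lambda (z / (2 * Real.pi * Complex.I * t)) (1 / 2 - θ - τ / 2) *
        Lambda (-(z / (2 * Real.pi * Complex.I * t))) (1 / 2 + θ + τ / 2) =
      (1 + Complex.exp (Real.pi * Complex.I * τ + 2 * Real.pi * Complex.I * θ - z / t))⁻¹ := by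
  have hπ : (Real.pi : ℂ) ≠ 0 := by exact_mod_cast Real.pi_ne_zero
  set w : ℂ := z / (2 * Real.pi * Complex.I * t) with hw_def
  clear_value w
  have hw0 : w ≠ 0 := by
    rw [hw_def]
    exact div_ne_zero hz (by simp [hπ, ht, Complex.I_ne_zero])
  -- Im w < 0
  have hu : 0 < (z / t).re := by
    have h1 : z / t = (t / z)⁻¹ := by field_simp
    rw [h1, Complex.inv_re]
    exact div_pos hre (Complex.normSq_pos.2 (div_ne_zero ht hz))
  have hwim : w.im < 0 := by
    have hweq : w = -(Complex.I) * (z / t) / (2 * (Real.pi : ℂ)) := by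
      rw [hw_def]; field_simp; linear_combination Complex.I_sq
    have : w.im = -(z / t).re / (2 * Real.pi) := by
      rw [hweq]
      have : (2 * (Real.pi : ℂ)) = ((2 * Real.pi : ℝ) : ℂ) := by push_cast; ring
      rw [this, Complex.div_ofReal_im]
      simp [Complex.mul_im]
    rw [this]
    exact div_neg_of_neg_of_pos (by linarith) (by positivity)
  -- log(-w) = log w + π I
  have hlog : Complex.log (-w) = Complex.log w + Real.pi * Complex.I := by
    have h1 : Complex.exp (Complex.log w + Real.pi * Complex.I) = -w := by
      rw [Complex.exp_add, Complex.exp_log hw0, Complex.exp_pi_mul_I]; ring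
    have harg : Complex.arg w < 0 := Complex.arg_neg_iff.2 hwim
    have harg2 : -Real.pi < Complex.arg w := Complex.neg_pi_lt_arg w
    have him : (Complex.log w + Real.pi * Complex.I).im = Complex.arg w + Real.pi := by
      simp [Complex.log_im]
    rw [← h1, Complex.log_exp (by rw [him]; linarith) (by rw [him]; linarith)]
  set s : ℂ := w + (1 / 2 - θ - τ / 2) with hs_def
  clear_value s
  have hsin : Complex.sin (Real.pi * s) ≠ 0 := by
    rw [Complex.sin_ne_zero_iff]
    intro k hk
    apply hint k
    have : s = k := by
      rw [mul_comm (k:ℂ)] at hk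
      exact mul_left_cancel₀ hπ hk
    rw [← this, hs_def]; ring
  have hΓ : Complex.Gamma s * Complex.Gamma (1 - s) = Real.pi / Complex.sin (Real.pi * s) :=
    Complex.Gamma_mul_Gamma_one_sub s
  -- 1 + E = 1 - exp(-2πI s)
  have h2piw : 2 * (Real.pi : ℂ) * Complex.I * w = z / t := by
    rw [hw_def]; field_simp
  have hE : Complex.exp (Real.pi * Complex.I * τ + 2 * Real.pi * Complex.I * θ - z / t)
      = -Complex.exp (-(2 * Real.pi * Complex.I * s)) := by
    have : -(2 * (Real.pi:ℂ) * Complex.I * s) =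
        (Real.pi * Complex.I * τ + 2 * Real.pi * Complex.I * θ - z / t) + -(Real.pi * Complex.I) := by
      rw [hs_def, ← h2piw]; ring
    rw [this, Complex.exp_add,
      show Complex.exp (-((Real.pi:ℂ) * Complex.I)) = -1 by
        rw [Complex.exp_neg, Complex.exp_pi_mul_I]; norm_num]
    ring
  -- main computation
  rw [hE]
  apply eq_inv_of_mul_eq_one_left
  unfold Lambda
  rw [show -w + (1 / 2 + θ + τ / 2) = 1 - s by rw [hs_def]; ring,
    show w + (1 / 2 - θ - τ / 2) = s from hs_def.symm, hlog]
  rw [div_mul_div_comm, mul_mul_mul_comm, hΓ, ← Complex.exp_add, mul_mul_mul_comm,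
    ← Complex.ofReal_mul, Real.mul_self_sqrt (by positivity : (0:ℝ) ≤ 2 * Real.pi)]
  rw [show w + -w = 0 by ring, Complex.exp_zero, ← Complex.exp_add,
    show (1 / 2 - θ - τ / 2 + w - 1 / 2) * Complex.log w +
        (1 / 2 + θ + τ / 2 + -w - 1 / 2) * (Complex.log w + Real.pi * Complex.I) =
        Real.pi * Complex.I / 2 + -(Real.pi * Complex.I * s) by rw [hs_def]; ring]
  have hI2 : Complex.exp ((Real.pi : ℂ) * Complex.I / 2) = Complex.I := by
    rw [show ((Real.pi : ℂ) * Complex.I / 2 : ℂ) = ((Real.pi : ℂ) / 2) * Complex.I by ring,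
      Complex.exp_mul_I, Complex.cos_pi_div_two, Complex.sin_pi_div_two]
    ring
  have e4 : Complex.exp (-(2 * (Real.pi:ℂ) * Complex.I * s)) =
      (Complex.exp ((Real.pi:ℂ) * Complex.I * s) * Complex.exp ((Real.pi:ℂ) * Complex.I * s))⁻¹ := by
    rw [show -(2 * (Real.pi:ℂ) * Complex.I * s) = -((Real.pi:ℂ) * Complex.I * s + (Real.pi:ℂ) * Complex.I * s) by ring,
      Complex.exp_neg, Complex.exp_add]
  have esin : Complex.sin ((Real.pi:ℂ) * s) =
      ((Complex.exp ((Real.pi:ℂ) * Complex.I * s))⁻¹ - Complex.exp ((Real.pi:ℂ) * Complex.I * s)) * Complex.I / 2 := by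
    rw [Complex.sin, show -((Real.pi:ℂ) * s) * Complex.I = -((Real.pi:ℂ) * Complex.I * s) by ring,
      show ((Real.pi:ℂ) * s) * Complex.I = (Real.pi:ℂ) * Complex.I * s by ring, Complex.exp_neg]
  rw [esin] at hsin ⊢
  rw [Complex.exp_add, hI2, e4, Complex.exp_neg]
  set X : ℂ := Complex.exp ((Real.pi:ℂ) * Complex.I * s) with hX_def
  clear_value X
  have hX : X ≠ 0 := hX_def ▸ Complex.exp_ne_zero _
  have hXX : X⁻¹ - X ≠ 0 := by
    intro h; apply hsin; rw [h]; ring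
  have h1X : X ^ 2 - 1 ≠ 0 := by
    intro h
    apply hXX
    have hx2 : X * X = 1 := by linear_combination h
    rw [inv_eq_of_mul_eq_one_right hx2]
    ring
  have hy : -((Real.pi:ℂ) * X ^ 2 * 2) + (Real.pi:ℂ) * X ^ 4 * 2 ≠ 0 := by
    have hfac : -((Real.pi:ℂ) * X ^ 2 * 2) + (Real.pi:ℂ) * X ^ 4 * 2
        = 2 * (Real.pi:ℂ) * X ^ 2 * (X ^ 2 - 1) := by ring
    rw [hfac]
    exact mul_ne_zero (mul_ne_zero (mul_ne_zero two_ne_zero hπ) (pow_ne_zero 2 hX)) h1X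
  field_simp
  ring_nf
  simp only [Complex.I_sq]
  field_simp [hy]
  ring
  have h1X' : (1:ℂ) - X ^ 2 ≠ 0 := fun h => h1X (by linear_combination -h)
  push_cast
  linear_combination (-2 * (Real.pi:ℂ)) * (mul_inv_cancel₀ h1X')
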